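/- Let N, D ≥ 1, let R > 1, and let W, W_V ∈ ℝ^{D×D} and X, X̃ ∈ ℝ^{N×D} be matrices satisfying ‖W‖ ≤ R, ‖W_V‖ ≤ R, ‖X‖ ≤ R, and ‖X̃‖ ≤ R in spectral norm. Define the self-attention map F(X) = D(X)^{-1} · A(X) · X W_V, where A(X) ∈ ℝ^{N×N} has entries A(X)_{i,j} = exp((X W Xᵀ)_{i,j}) and D(X) ∈ ℝ^{N×N} is the diagonal matrix whose i-th diagonal entry is the i-th row sum Σ_{j=1}^N A(X)_{i,j}. Then for every i ∈ [N] and j ∈ [D], |F(X)_{i,j} − F(X̃)_{i,j}| ≤ 5 R⁴ √(N D) · ‖X − X̃‖. -/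

import Mathlib

noncomputable def specNorm {m n : ℕ} (A : Matrix (Fin m) (Fin n) ℝ) : ℝ :=
  ‖LinearMap.toContinuousLinearMap (Matrix.toEuclideanLin A)‖

/-- Self-attention: `F(X) = D(X)⁻¹ · A(X) · (X · W_V)` with `A(X)ᵢⱼ = exp((X W Xᵀ)ᵢⱼ)`
and `D(X)` the diagonal matrix of row sums of `A(X)`. -/
noncomputable def attn {N D : ℕ} (W WV : Matrix (Fin D) (Fin D) ℝ)
    (X : Matrix (Fin N) (Fin D) ℝ) : Matrix (Fin N) (Fin D) ℝ :=
  (Matrix.diagonal fun i => ∑ j, Real.exp ((X * W * X.transpose) i j))⁻¹ *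
    (Matrix.of fun i j => Real.exp ((X * W * X.transpose) i j)) * (X * WV)

open scoped Matrix.Norms.L2Operator
open Matrix Real

lemma specNorm_eq {m n : ℕ} (A : Matrix (Fin m) (Fin n) ℝ) : specNorm A = ‖A‖ := rfl

lemma coord_le {m : ℕ} (y : EuclideanSpace ℝ (Fin m)) (i : Fin m) : |y i| ≤ ‖y‖ := by
  rw [EuclideanSpace.norm_eq]
  have h1 : ‖y i‖ ^ 2 ≤ ∑ k, ‖y k‖ ^ 2 :=
    Finset.single_le_sum (f := fun k => ‖y k‖ ^ 2) (fun k _ => by positivity) (Finset.mem_univ i)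
  calc |y i| = √(‖y i‖^2) := by rw [Real.sqrt_sq_eq_abs]; simp
  _ ≤ √(∑ k, ‖y k‖^2) := Real.sqrt_le_sqrt h1

lemma entry_le {m n : ℕ} (A : Matrix (Fin m) (Fin n) ℝ) (i : Fin m) (j : Fin n) :
    |A i j| ≤ ‖A‖ := by
  have hx : ‖(EuclideanSpace.single j (1:ℝ) : EuclideanSpace ℝ (Fin n))‖ = 1 := by
    simp [EuclideanSpace.norm_single]
  have h2 := Matrix.l2_opNorm_mulVec A (EuclideanSpace.single j (1:ℝ))
  rw [hx, mul_one] at h2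
  have h3 := coord_le ((EuclideanSpace.equiv (Fin m) ℝ).symm
      (A.mulVec (EuclideanSpace.single j (1:ℝ)))) i
  have h4 : ((EuclideanSpace.equiv (Fin m) ℝ).symm
      (A.mulVec (EuclideanSpace.single j (1:ℝ)))) i = A i j := by
    show (A.mulVec (Pi.single j (1:ℝ))) i = A i j
    rw [Matrix.mulVec_single]; simp
  rw [h4] at h3
  exact h3.trans h2

lemma transpose_norm_eq {m n : ℕ} (A : Matrix (Fin m) (Fin n) ℝ) : ‖Aᵀ‖ = ‖A‖ := by
  rw [← Matrix.conjTranspose_eq_transpose_of_trivial]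
  exact Matrix.l2_opNorm_conjTranspose A

lemma norm_triple {m n p q : ℕ} (A : Matrix (Fin m) (Fin n) ℝ)
    (B : Matrix (Fin n) (Fin p) ℝ) (C : Matrix (Fin p) (Fin q) ℝ) :
    ‖A * B * C‖ ≤ ‖A‖ * ‖B‖ * ‖C‖ := by
  refine (Matrix.l2_opNorm_mul _ _).trans ?_
  have h := Matrix.l2_opNorm_mul A B
  have := norm_nonneg C
  nlinarith [norm_nonneg (A * B), norm_nonneg A, norm_nonneg B]

lemma tanh_aux : ∀ t : ℝ, 0 ≤ t → Real.exp t - 1 ≤ t * (Real.exp t + 1) / 2 := by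
  have hmono : Monotone (fun t : ℝ => t * (Real.exp t + 1) / 2 - (Real.exp t - 1)) := by
    have hd : ∀ t : ℝ, HasDerivAt (fun t : ℝ => t * (Real.exp t + 1) / 2 - (Real.exp t - 1))
        (((Real.exp t + 1) + t * Real.exp t) / 2 - Real.exp t) t := by
      intro t
      have h1 : HasDerivAt (fun t : ℝ => t * (Real.exp t + 1))
          (1 * (Real.exp t + 1) + t * Real.exp t) t :=
        (hasDerivAt_id t).mul ((Real.hasDerivAt_exp t).add_const 1)
      have h2 := (h1.div_const 2).sub ((Real.hasDerivAt_exp t).sub_const 1)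
      simp only [one_mul] at h2
      exact h2
    apply monotone_of_deriv_nonneg
    · exact fun t => (hd t).differentiableAt
    · intro t
      rw [(hd t).deriv]
      have key : (1 - t) * Real.exp t ≤ 1 := by
        have := Real.add_one_le_exp (-t)
        have h := mul_le_mul_of_nonneg_right this (Real.exp_nonneg t)
        rw [← Real.exp_add] at h
        simp only [neg_add_cancel, Real.exp_zero] at h
        nlinarith [Real.exp_pos t]
      nlinarith [Real.exp_pos t]
  intro t ht
  have := hmono ht
  simp only [zero_mul, Real.exp_zero, zero_div, sub_self] at this
  linarith

lemma exp_diff_le (x y : ℝ) :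
    |Real.exp x - Real.exp y| ≤ |x - y| * (Real.exp x + Real.exp y) / 2 := by
  wlog h : y ≤ x generalizing x y
  · have := this y x (le_of_not_ge h)
    rw [abs_sub_comm y x, abs_sub_comm (Real.exp y)] at this
    linarith [this]
  have ht : 0 ≤ x - y := by linarith
  have h1 := tanh_aux (x - y) ht
  have hkey := mul_le_mul_of_nonneg_left h1 (Real.exp_nonneg y)
  rw [abs_of_nonneg ht, abs_of_nonneg
    (by nlinarith [Real.exp_le_exp.2 h] : (0:ℝ) ≤ Real.exp x - Real.exp y)]
  have hxy : Real.exp y * Real.exp (x - y) = Real.exp x := by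
    rw [← Real.exp_add]; ring_nf
  nlinarith [Real.exp_pos y, Real.exp_pos x]

lemma softmax_l1 {N : ℕ} (hN : 0 < N) (a b : Fin N → ℝ) (δ : ℝ)
    (hδ : ∀ k, |a k - b k| ≤ δ) :
    ∑ k, |Real.exp (a k) / (∑ l, Real.exp (a l)) - Real.exp (b k) / (∑ l, Real.exp (b l))|
      ≤ 2 * δ := by
  have : Nonempty (Fin N) := Fin.pos_iff_nonempty.mp hN
  set S := ∑ l, Real.exp (a l) with hS
  set T := ∑ l, Real.exp (b l) with hT
  have hSpos : 0 < S := Finset.sum_pos (fun l _ => Real.exp_pos _) Finset.univ_nonempty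
  have hTpos : 0 < T := Finset.sum_pos (fun l _ => Real.exp_pos _) Finset.univ_nonempty
  have key : ∀ k, |Real.exp (a k)/S - Real.exp (b k)/T| ≤
      (∑ l, δ * (Real.exp (a k) * Real.exp (b l) + Real.exp (b k) * Real.exp (a l))) / (S * T) := by
    intro k
    rw [div_sub_div _ _ hSpos.ne' hTpos.ne', abs_div, abs_of_pos (mul_pos hSpos hTpos)]
    gcongr
    have hnum : Real.exp (a k) * T - Real.exp (b k) * S
        = ∑ l, (Real.exp (a k) * Real.exp (b l) - Real.exp (b k) * Real.exp (a l)) := by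
      rw [hS, hT, Finset.mul_sum, Finset.mul_sum, ← Finset.sum_sub_distrib]
    rw [show Real.exp (a k) * T - S * Real.exp (b k)
        = Real.exp (a k) * T - Real.exp (b k) * S by ring, hnum]
    refine (Finset.abs_sum_le_sum_abs _ _).trans (Finset.sum_le_sum fun l _ => ?_)
    have h1 : |Real.exp (a k + b l) - Real.exp (b k + a l)| ≤
        |a k + b l - (b k + a l)| * (Real.exp (a k + b l) + Real.exp (b k + a l)) / 2 :=
      exp_diff_le _ _
    have h2 : |a k + b l - (b k + a l)| ≤ 2 * δ := by
      have := hδ k; have := hδ l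
      calc |a k + b l - (b k + a l)| = |(a k - b k) - (a l - b l)| := by ring_nf
      _ ≤ |a k - b k| + |a l - b l| := abs_sub _ _
      _ ≤ 2 * δ := by linarith
    rw [Real.exp_add, Real.exp_add] at h1
    have hpos : 0 ≤ Real.exp (a k) * Real.exp (b l) + Real.exp (b k) * Real.exp (a l) := by
      positivity
    calc |Real.exp (a k) * Real.exp (b l) - Real.exp (b k) * Real.exp (a l)|
        ≤ |a k + b l - (b k + a l)| *
          (Real.exp (a k) * Real.exp (b l) + Real.exp (b k) * Real.exp (a l)) / 2 := h1
      _ ≤ (2*δ) * (Real.exp (a k) * Real.exp (b l) + Real.exp (b k) * Real.exp (a l)) / 2 := by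
          gcongr
      _ = δ * (Real.exp (a k) * Real.exp (b l) + Real.exp (b k) * Real.exp (a l)) := by ring
  calc ∑ k, |Real.exp (a k)/S - Real.exp (b k)/T|
      ≤ ∑ k, (∑ l, δ * (Real.exp (a k) * Real.exp (b l) + Real.exp (b k) * Real.exp (a l)))
        / (S * T) := Finset.sum_le_sum fun k _ => key k
    _ = (∑ k, ∑ l, δ * (Real.exp (a k) * Real.exp (b l) + Real.exp (b k) * Real.exp (a l)))
        / (S * T) := by rw [Finset.sum_div]
    _ = (2 * δ * (S * T)) / (S * T) := by
        congr 1
        have e1 : ∑ k, ∑ l, Real.exp (a k) * Real.exp (b l) = S * T :=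
          (Finset.sum_mul_sum _ _ _ _).symm
        have e2 : ∑ k, ∑ l, Real.exp (b k) * Real.exp (a l) = T * S :=
          (Finset.sum_mul_sum _ _ _ _).symm
        calc ∑ k, ∑ l, δ * (Real.exp (a k) * Real.exp (b l) + Real.exp (b k) * Real.exp (a l))
            = δ * ((∑ k, ∑ l, Real.exp (a k) * Real.exp (b l)) +
              (∑ k, ∑ l, Real.exp (b k) * Real.exp (a l))) := by
              simp [Finset.mul_sum, Finset.sum_add_distrib, mul_add]
          _ = 2 * δ * (S * T) := by rw [e1, e2]; ring
    _ = 2 * δ := by field_simp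

lemma attn_apply {N D : ℕ} (hN : 0 < N) (W WV : Matrix (Fin D) (Fin D) ℝ)
    (Y : Matrix (Fin N) (Fin D) ℝ) (i : Fin N) (j : Fin D) :
    attn W WV Y i j = ∑ k, Real.exp ((Y * W * Yᵀ) i k)
      / (∑ l, Real.exp ((Y * W * Yᵀ) i l)) * (Y * WV) k j := by
  have : Nonempty (Fin N) := Fin.pos_iff_nonempty.mp hN
  have hf : ∀ r : Fin N, (∑ l, Real.exp ((Y * W * Yᵀ) r l)) ≠ 0 :=
    fun r => (Finset.sum_pos (fun l _ => Real.exp_pos _) Finset.univ_nonempty).ne'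
  have hinv : (Matrix.diagonal fun r => ∑ l, Real.exp ((Y * W * Yᵀ) r l))⁻¹
      = Matrix.diagonal fun r => (∑ l, Real.exp ((Y * W * Yᵀ) r l))⁻¹ := by
    apply Matrix.inv_eq_left_inv
    rw [Matrix.diagonal_mul_diagonal]
    rw [show (fun r => (∑ l, Real.exp ((Y * W * Yᵀ) r l))⁻¹ * (∑ l, Real.exp ((Y * W * Yᵀ) r l)))
        = fun _ : Fin N => (1:ℝ) from funext fun r => inv_mul_cancel₀ (hf r)]
    exact Matrix.diagonal_one
  show ((Matrix.diagonal fun r => ∑ l, Real.exp ((Y * W * Yᵀ) r l))⁻¹ *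
    (Matrix.of fun r s => Real.exp ((Y * W * Yᵀ) r s)) * (Y * WV)) i j = _
  rw [hinv, Matrix.mul_apply]
  refine Finset.sum_congr rfl fun k _ => ?_
  rw [Matrix.diagonal_mul]
  simp [Matrix.of_apply, div_eq_inv_mul, mul_assoc]

set_option maxHeartbeats 1000000 in
/-- Entrywise Lipschitz bound for the self-attention module on a spectral-norm ball of radius R:
|F(X)ᵢⱼ − F(X̃)ᵢⱼ| ≤ 5 R⁴ √(N·D) · ‖X − X̃‖. -/
theorem stmt_3 (N D : ℕ) (hN : 1 ≤ N) (hD : 1 ≤ D) (R : ℝ) (hR : 1 < R)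
    (W WV : Matrix (Fin D) (Fin D) ℝ) (X Xt : Matrix (Fin N) (Fin D) ℝ)
    (hW : specNorm W ≤ R) (hWV : specNorm WV ≤ R)
    (hX : specNorm X ≤ R) (hXt : specNorm Xt ≤ R) :
    ∀ (i : Fin N) (j : Fin D),
      |attn W WV X i j - attn W WV Xt i j| ≤
        5 * R ^ 4 * Real.sqrt ((N : ℝ) * (D : ℝ)) * specNorm (X - Xt) := by
  intro i j
  have hN0 : 0 < N := hN
  have : Nonempty (Fin N) := Fin.pos_iff_nonempty.mp hN0
  have hW' : ‖W‖ ≤ R := hW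
  have hWV' : ‖WV‖ ≤ R := hWV
  have hX' : ‖X‖ ≤ R := hX
  have hXt' : ‖Xt‖ ≤ R := hXt
  have hR0 : (0:ℝ) < R := lt_trans one_pos hR
  have hεnn : (0:ℝ) ≤ ‖X - Xt‖ := norm_nonneg _
  set ε := ‖X - Xt‖ with hεdef
  -- key entrywise bounds
  have hc : ∀ k, |(X * WV) k j| ≤ R^2 := by
    intro k
    refine (entry_le _ k j).trans ((Matrix.l2_opNorm_mul X WV).trans ?_)
    nlinarith [norm_nonneg X, norm_nonneg WV]
  have hcd : ∀ k, |(X * WV) k j - (Xt * WV) k j| ≤ R * ε := by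
    intro k
    have h1 : (X * WV) k j - (Xt * WV) k j = ((X - Xt) * WV) k j := by
      rw [Matrix.sub_mul]; simp [Matrix.sub_apply]
    rw [h1]
    refine (entry_le _ k j).trans ((Matrix.l2_opNorm_mul _ _).trans ?_)
    rw [mul_comm]
    exact mul_le_mul_of_nonneg_right hWV' hεnn
  have hab : ∀ k, |(X * W * Xᵀ) i k - (Xt * W * Xtᵀ) i k| ≤ 2 * R^2 * ε := by
    intro k
    have hdecomp : X * W * Xᵀ - Xt * W * Xtᵀ = (X - Xt) * W * Xᵀ + Xt * W * (X - Xt)ᵀ := by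
      rw [Matrix.transpose_sub, Matrix.sub_mul, Matrix.sub_mul, Matrix.mul_sub]
      abel
    have he : (X * W * Xᵀ) i k - (Xt * W * Xtᵀ) i k
        = ((X - Xt) * W * Xᵀ) i k + (Xt * W * (X - Xt)ᵀ) i k := by
      have := congrFun (congrFun hdecomp i) k
      simpa [Matrix.sub_apply, Matrix.add_apply] using this
    rw [he]
    have t1 : |((X - Xt) * W * Xᵀ) i k| ≤ ε * R * R := by
      refine (entry_le _ i k).trans ((norm_triple _ _ _).trans ?_)
      rw [transpose_norm_eq]
      exact mul_le_mul (mul_le_mul_of_nonneg_left hW' (norm_nonneg _)) hX'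
        (norm_nonneg _) (by positivity)
    have t2 : |(Xt * W * (X - Xt)ᵀ) i k| ≤ R * R * ε := by
      refine (entry_le _ i k).trans ((norm_triple _ _ _).trans ?_)
      rw [transpose_norm_eq]
      exact mul_le_mul (mul_le_mul hXt' hW' (norm_nonneg _) (le_of_lt hR0)) le_rfl
        (norm_nonneg _) (by positivity)
    calc |((X - Xt) * W * Xᵀ) i k + (Xt * W * (X - Xt)ᵀ) i k|
        ≤ |((X - Xt) * W * Xᵀ) i k| + |(Xt * W * (X - Xt)ᵀ) i k| := abs_add_le _ _
      _ ≤ ε * R * R + R * R * ε := add_le_add t1 t2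
      _ = 2 * R^2 * ε := by ring
  have hsoft := softmax_l1 hN0 (fun k => (X * W * Xᵀ) i k) (fun k => (Xt * W * Xtᵀ) i k)
    (2 * R^2 * ε) hab
  set S := ∑ l, Real.exp ((X * W * Xᵀ) i l) with hS
  set T := ∑ l, Real.exp ((Xt * W * Xtᵀ) i l) with hT
  have hTpos : 0 < T := Finset.sum_pos (fun l _ => Real.exp_pos _) Finset.univ_nonempty
  have hsumT : ∑ k, Real.exp ((Xt * W * Xtᵀ) i k) / T = 1 := by
    rw [← Finset.sum_div, ← hT, div_self hTpos.ne']
  rw [attn_apply hN0, attn_apply hN0]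
  have hsplit : ∑ k, Real.exp ((X * W * Xᵀ) i k) / S * (X * WV) k j
      - ∑ k, Real.exp ((Xt * W * Xtᵀ) i k) / T * (Xt * WV) k j
      = ∑ k, ((Real.exp ((X * W * Xᵀ) i k) / S - Real.exp ((Xt * W * Xtᵀ) i k) / T)
          * (X * WV) k j
        + Real.exp ((Xt * W * Xtᵀ) i k) / T * ((X * WV) k j - (Xt * WV) k j)) := by
    rw [← Finset.sum_sub_distrib]
    exact Finset.sum_congr rfl fun k _ => by ring
  rw [hsplit]
  have hterm : ∀ k, |(Real.exp ((X * W * Xᵀ) i k) / S - Real.exp ((Xt * W * Xtᵀ) i k) / T)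
          * (X * WV) k j
        + Real.exp ((Xt * W * Xtᵀ) i k) / T * ((X * WV) k j - (Xt * WV) k j)|
      ≤ |Real.exp ((X * W * Xᵀ) i k) / S - Real.exp ((Xt * W * Xtᵀ) i k) / T| * R^2
        + Real.exp ((Xt * W * Xtᵀ) i k) / T * (R * ε) := by
    intro k
    have hq : 0 ≤ Real.exp ((Xt * W * Xtᵀ) i k) / T := by positivity
    refine (abs_add_le _ _).trans (add_le_add ?_ ?_)
    · rw [abs_mul]
      exact mul_le_mul_of_nonneg_left (hc k) (abs_nonneg _)
    · rw [abs_mul, abs_of_nonneg hq]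
      exact mul_le_mul_of_nonneg_left (hcd k) hq
  calc |∑ k, ((Real.exp ((X * W * Xᵀ) i k) / S - Real.exp ((Xt * W * Xtᵀ) i k) / T)
          * (X * WV) k j
        + Real.exp ((Xt * W * Xtᵀ) i k) / T * ((X * WV) k j - (Xt * WV) k j))|
      ≤ ∑ k, (|Real.exp ((X * W * Xᵀ) i k) / S - Real.exp ((Xt * W * Xtᵀ) i k) / T| * R^2
        + Real.exp ((Xt * W * Xtᵀ) i k) / T * (R * ε)) :=
        (Finset.abs_sum_le_sum_abs _ _).trans (Finset.sum_le_sum fun k _ => hterm k)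
    _ = (∑ k, |Real.exp ((X * W * Xᵀ) i k) / S - Real.exp ((Xt * W * Xtᵀ) i k) / T|) * R^2
        + (∑ k, Real.exp ((Xt * W * Xtᵀ) i k) / T) * (R * ε) := by
        rw [Finset.sum_add_distrib, Finset.sum_mul, Finset.sum_mul]
    _ ≤ (2 * (2 * R^2 * ε)) * R^2 + 1 * (R * ε) := by
        rw [hsumT]
        have h2 : (0:ℝ) ≤ R^2 := by positivity
        exact add_le_add (mul_le_mul_of_nonneg_right hsoft h2) le_rfl
    _ ≤ 5 * R ^ 4 * Real.sqrt ((N : ℝ) * (D : ℝ)) * ε := by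
        have hs : 1 ≤ Real.sqrt ((N : ℝ) * (D : ℝ)) := by
          rw [Real.one_le_sqrt]
          have h1 : (1:ℝ) ≤ (N:ℝ) := by exact_mod_cast hN
          have h2 : (1:ℝ) ≤ (D:ℝ) := by exact_mod_cast hD
          nlinarith
        have hR4 : R ≤ R^4 := by
          have h := pow_le_pow_right₀ (le_of_lt hR) (show 1 ≤ 4 by norm_num)
          simpa using h
        have hkey : 4 * R^4 * ε + R * ε ≤ 5 * R^4 * ε := by nlinarith
        have hpos : 0 ≤ 5 * R^4 * ε := by positivity
        nlinarith [mul_le_mul_of_nonneg_left hs hpos]
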